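/- For every fixed real number z < 0, the function G(s) = (1 − z/s)^{−s} is strictly monotonically decreasing on the interval [1, ∞). -/

import Mathlib

/-- For fixed `z < 0`, the function `s ↦ (1 - z/s)^(-s)` is strictly decreasing on `[1, ∞)`. -/
theorem strictAntiOn_G_of_neg (z : ℝ) (hz : z < 0) :
    StrictAntiOn (fun s : ℝ => (1 - z / s) ^ (-s)) (Set.Ici (1 : ℝ)) := by
  have hbase : ∀ s : ℝ, 1 ≤ s → 1 < 1 - z / s := by
    intro s hs
    have hs0 : 0 < s := lt_of_lt_of_le one_pos hs
    have h : z / s < 0 := div_neg_of_neg_of_pos hz hs0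
    linarith
  -- the auxiliary function f s = s * log (1 - z/s) is strictly increasing
  have hf : StrictMonoOn (fun s : ℝ => s * Real.log (1 - z / s)) (Set.Ici (1 : ℝ)) := by
    apply strictMonoOn_of_deriv_pos (convex_Ici 1)
    · apply ContinuousOn.mul continuousOn_id
      apply ContinuousOn.log
      · apply ContinuousOn.sub continuousOn_const
        apply ContinuousOn.div continuousOn_const continuousOn_id
        intro x hx; exact ne_of_gt (lt_of_lt_of_le one_pos hx)
      · intro x hx; exact ne_of_gt (lt_trans one_pos (hbase x hx))
    · intro x hx
      rw [interior_Ici] at hx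
      have hx0 : 0 < x := lt_trans one_pos hx
      have hbx : 1 < 1 - z / x := hbase x (le_of_lt hx)
      have hbx0 : (0:ℝ) < 1 - z / x := lt_trans one_pos hbx
      have hxz : 0 < x - z := by linarith
      have h1 : HasDerivAt (fun s : ℝ => 1 - z / s) (z / x ^ 2) x := by
        have h := ((hasDerivAt_inv (ne_of_gt hx0)).const_mul z).const_sub 1
        simp only [div_eq_mul_inv]
        rw [show z * (x ^ 2)⁻¹ = -(z * -(x ^ 2)⁻¹) by ring]
        exact h
      have h2 : HasDerivAt (fun s : ℝ => Real.log (1 - z / s))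
          (z / x ^ 2 / (1 - z / x)) x := h1.log (ne_of_gt hbx0)
      have h3 : HasDerivAt (fun s : ℝ => s * Real.log (1 - z / s))
          (1 * Real.log (1 - z / x) + x * (z / x ^ 2 / (1 - z / x))) x :=
        (hasDerivAt_id x).mul h2
      rw [h3.deriv]
      have hsimp : x * (z / x ^ 2 / (1 - z / x)) = z / (x - z) := by
        field_simp
      rw [one_mul, hsimp]
      -- need: 0 < log (1 - z/x) + z/(x-z)
      have hkey : Real.log (x / (x - z)) < x / (x - z) - 1 := by
        apply Real.log_lt_sub_one_of_pos (div_pos hx0 hxz)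
        intro h
        have : x = x - z := by
          field_simp at h; linarith
        linarith
      have hlogeq : Real.log (x / (x - z)) = - Real.log (1 - z / x) := by
        rw [← Real.log_inv]
        congr 1
        field_simp
      have hsub : x / (x - z) - 1 = z / (x - z) := by field_simp; ring
      rw [hlogeq, hsub] at hkey
      linarith
  intro a ha b hb hab
  have ha0 : 0 < a := lt_of_lt_of_le one_pos ha
  have hb0 : 0 < b := lt_of_lt_of_le one_pos hb
  simp only
  rw [Real.rpow_def_of_pos (lt_trans one_pos (hbase a ha)),
      Real.rpow_def_of_pos (lt_trans one_pos (hbase b hb))]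
  apply Real.exp_lt_exp.2
  have := hf ha hb hab
  nlinarith [this]
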